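/- For every positive integer m, there exists a tuple (f₁,…,f_m) ∈ H(2^ℕ)^m whose orbit under the diagonal conjugacy action, namely {(g f₁ g⁻¹,…,g f_m g⁻¹) : g ∈ H(2^ℕ)}, is dense in H(2^ℕ)^m. -/

import Mathlib

/-- The Cantor space `2^ℕ`. -/
abbrev Cantor : Type := ℕ → Bool

/-- The group of self-homeomorphisms of the Cantor space. -/
abbrev H : Type := Cantor ≃ₜ Cantor

/-- Group structure on `H(2^ℕ)`: multiplication is composition. -/
instance : Group H where
  mul f g := g.trans f
  one := Homeomorph.refl Cantor
  inv := Homeomorph.symm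
  mul_assoc _ _ _ := rfl
  one_mul _ := Homeomorph.ext fun _ => rfl
  mul_one _ := Homeomorph.ext fun _ => rfl
  inv_mul_cancel := Homeomorph.self_trans_symm

/-- The compact-open topology on `H(2^ℕ)`, induced from `C(2^ℕ, 2^ℕ)`. -/
instance : TopologicalSpace H :=
  TopologicalSpace.induced (fun f : H => (f : C(Cantor, Cantor)))
    ContinuousMap.compactOpen

namespace DOrbit

/-- The level lemma: a compact set inside an open set in `ℕ → Bool` is contained in it
"uniformly at some finite level". -/
lemma level_lemma {C O : Set (ℕ → Bool)} (hC : IsCompact C) (hO : IsOpen O) (hCO : C ⊆ O) :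
    ∃ n : ℕ, ∀ x ∈ C, ∀ y : ℕ → Bool, (∀ j < n, y j = x j) → y ∈ O := by
  set On : ℕ → Set (ℕ → Bool) := fun n => {x | ∀ y : ℕ → Bool, (∀ j < n, y j = x j) → y ∈ O}
    with hOn
  have hopen : ∀ n, IsOpen (On n) := by
    intro n
    rw [isOpen_iff_forall_mem_open]
    intro x hx
    refine ⟨{y | ∀ j < n, y j = x j}, ?_, ?_, fun j _ => rfl⟩
    · intro y hy z hz
      exact hx z fun j hj => (hz j hj).trans (hy j hj)
    · have : {y : ℕ → Bool | ∀ j < n, y j = x j} = ⋂ j ∈ Finset.range n,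
        (fun y : ℕ → Bool => y j) ⁻¹' {x j} := by
        ext y; simp [Finset.mem_range]
      rw [this]
      exact isOpen_biInter_finset fun j _ =>
        (continuous_apply j).isOpen_preimage _ (isOpen_discrete _)
  have hmono : Monotone On := by
    intro a b hab x hx y hy
    exact hx y fun j hj => hy j (lt_of_lt_of_le hj hab)
  have hcover : C ⊆ ⋃ n, On n := by
    intro x hx
    obtain ⟨I, u, hIu, hsub⟩ := isOpen_pi_iff.mp hO x (hCO hx)
    rcases I.eq_empty_or_nonempty with h | h
    · refine Set.mem_iUnion.mpr ⟨0, fun y _ => hsub ?_⟩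
      intro a ha; rw [h] at ha; simp at ha
    · refine Set.mem_iUnion.mpr ⟨(I.max' h) + 1, fun y hy => hsub ?_⟩
      intro a ha
      rw [hy a (Nat.lt_succ_of_le (I.le_max' a ha))]
      exact (hIu a ha).2
  obtain ⟨t, ht⟩ := hC.elim_finite_subcover On hopen hcover
  rcases t.eq_empty_or_nonempty with h | h
  · subst h; simp at ht
    exact ⟨0, fun x hx => absurd (ht ▸ hx) (Set.notMem_empty x)⟩
  · refine ⟨t.max' h, fun x hx y hy => ?_⟩
    obtain ⟨n, hn, hxn⟩ := Set.mem_iUnion₂.mp (ht hx)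
    exact hmono (t.le_max' n hn) hxn y hy

/-- `x` starts with the finite word `s`. -/
def Pre (s : List Bool) (x : ℕ → Bool) : Prop :=
  ∀ (j : ℕ) (h : j < s.length), x j = s.get ⟨j, h⟩

/-- Prepend a finite word to an infinite sequence. -/
def app (s : List Bool) (x : ℕ → Bool) : ℕ → Bool :=
  fun k => if h : k < s.length then s.get ⟨k, h⟩ else x (k - s.length)

/-- Drop the first `n` values. -/
def tl (n : ℕ) (x : ℕ → Bool) : ℕ → Bool := fun k => x (k + n)

lemma pre_app (s : List Bool) (x : ℕ → Bool) : Pre s (app s x) := by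
  intro j h; simp [app, h]

lemma tl_app (s : List Bool) (x : ℕ → Bool) : tl s.length (app s x) = x := by
  funext k; simp [tl, app]

lemma app_tl {s : List Bool} {x : ℕ → Bool} (h : Pre s x) : app s (tl s.length x) = x := by
  funext k
  by_cases hk : k < s.length
  · simp [app, hk, h k hk]
  · simp [app, hk, tl, Nat.sub_add_cancel (le_of_not_gt hk)]

lemma continuous_app (s : List Bool) : Continuous (app s) := by
  refine continuous_pi fun k => ?_
  by_cases hk : k < s.length
  · simpa [app, hk] using continuous_const
  · simpa [app, hk] using continuous_apply (k - s.length)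

lemma continuous_tl (n : ℕ) : Continuous (tl n) :=
  continuous_pi fun k => continuous_apply (k + n)

lemma isOpen_pre (s : List Bool) : IsOpen {x : ℕ → Bool | Pre s x} := by
  have : {x : ℕ → Bool | Pre s x} = ⋂ j ∈ Finset.range s.length,
      (fun x : ℕ → Bool => x j) ⁻¹' {y | ∀ h : j < s.length, y = s.get ⟨j, h⟩} := by
    ext x
    constructor
    · intro h
      simp only [Set.mem_iInter, Finset.mem_range]
      intro j hj
      intro h'
      exact h j h'
    · intro h j hj
      simp only [Set.mem_iInter, Finset.mem_range] at h
      exact h j hj hj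
  rw [this]
  exact isOpen_biInter_finset fun j _ =>
    (continuous_apply j).isOpen_preimage _ (isOpen_discrete _)

lemma pre_of_prefix {s t : List Bool} (h : s <+: t) {x : ℕ → Bool} (hx : Pre t x) : Pre s x := by
  intro j hj
  have hjt : j < t.length := lt_of_lt_of_le hj h.length_le
  rw [hx j hjt]
  obtain ⟨r, rfl⟩ := h
  simp [List.getElem_append_left hj]

/-- two words which both occur as prefixes of `x` are comparable -/
lemma prefix_or_prefix {s t : List Bool} {x : ℕ → Bool} (hs : Pre s x) (ht : Pre t x) :
    s <+: t ∨ t <+: s := by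
  have key : ∀ s t : List Bool, s.length ≤ t.length → Pre s x → Pre t x → s <+: t := by
    intro s t h hs ht
    rw [List.prefix_iff_eq_take]
    refine List.ext_getElem (by simp [h]) ?_
    intro j hj hj'
    have hjt : j < t.length := lt_of_lt_of_le hj h
    have h1 := hs j hj
    have h2 := ht j hjt
    simp only [List.get_eq_getElem] at h1 h2
    simp [← h1, h2]
  rcases le_total s.length t.length with h | h
  · exact Or.inl (key s t h hs ht)
  · exact Or.inr (key t s h ht hs)

/-- A prefix-replacement system: a finite list of pairs of words such that the first
components uniquely cover every point, and likewise the second components. -/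
structure PSys where
  P : List (List Bool × List Bool)
  dom : ∀ x : ℕ → Bool, ∃! p, p ∈ P ∧ Pre p.1 x
  cod : ∀ x : ℕ → Bool, ∃! p, p ∈ P ∧ Pre p.2 x

namespace PSys

variable (S : PSys)

noncomputable def fwd (x : ℕ → Bool) : ℕ → Bool :=
  app (S.dom x).choose.2 (tl (S.dom x).choose.1.length x)

noncomputable def bwd (x : ℕ → Bool) : ℕ → Bool :=
  app (S.cod x).choose.1 (tl (S.cod x).choose.2.length x)

lemma dom_choose_spec (x : ℕ → Bool) :
    (S.dom x).choose ∈ S.P ∧ Pre (S.dom x).choose.1 x := (S.dom x).choose_spec.1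

lemma cod_choose_spec (x : ℕ → Bool) :
    (S.cod x).choose ∈ S.P ∧ Pre (S.cod x).choose.2 x := (S.cod x).choose_spec.1

lemma dom_choose_eq {x : ℕ → Bool} {p : List Bool × List Bool} (hp : p ∈ S.P)
    (hpre : Pre p.1 x) : (S.dom x).choose = p :=
  ((S.dom x).choose_spec.2 p ⟨hp, hpre⟩).symm.trans rfl |>.symm ▸ rfl

lemma fwd_eq {x : ℕ → Bool} {p : List Bool × List Bool} (hp : p ∈ S.P) (hpre : Pre p.1 x) :
    S.fwd x = app p.2 (tl p.1.length x) := by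
  have h := (S.dom x).choose_spec.2 p ⟨hp, hpre⟩
  rw [fwd, h]

lemma bwd_eq {x : ℕ → Bool} {p : List Bool × List Bool} (hp : p ∈ S.P) (hpre : Pre p.2 x) :
    S.bwd x = app p.1 (tl p.2.length x) := by
  have h := (S.cod x).choose_spec.2 p ⟨hp, hpre⟩
  rw [bwd, h]

lemma bwd_fwd (x : ℕ → Bool) : S.bwd (S.fwd x) = x := by
  obtain ⟨hp, hpre⟩ := S.dom_choose_spec x
  set p := (S.dom x).choose with hpdef
  have hfwd : S.fwd x = app p.2 (tl p.1.length x) := rfl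
  have hpre2 : Pre p.2 (S.fwd x) := hfwd ▸ pre_app _ _
  rw [S.bwd_eq hp hpre2, hfwd, tl_app, app_tl hpre]

lemma fwd_bwd (x : ℕ → Bool) : S.fwd (S.bwd x) = x := by
  obtain ⟨hp, hpre⟩ := S.cod_choose_spec x
  set p := (S.cod x).choose with hpdef
  have hbwd : S.bwd x = app p.1 (tl p.2.length x) := rfl
  have hpre2 : Pre p.1 (S.bwd x) := hbwd ▸ pre_app _ _
  rw [S.fwd_eq hp hpre2, hbwd, tl_app, app_tl hpre]

lemma continuous_fwd : Continuous S.fwd := by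
  rw [continuous_iff_continuousAt]
  intro x
  obtain ⟨hp, hpre⟩ := S.dom_choose_spec x
  set p := (S.dom x).choose with hpdef
  have hev : S.fwd =ᶠ[nhds x] (fun y => app p.2 (tl p.1.length y)) := by
    filter_upwards [(isOpen_pre p.1).mem_nhds hpre] with y hy
    exact S.fwd_eq hp hy
  exact (((continuous_app p.2).comp (continuous_tl p.1.length)).continuousAt).congr hev.symm

lemma continuous_bwd : Continuous S.bwd := by
  rw [continuous_iff_continuousAt]
  intro x
  obtain ⟨hp, hpre⟩ := S.cod_choose_spec x
  set p := (S.cod x).choose with hpdef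
  have hev : S.bwd =ᶠ[nhds x] (fun y => app p.1 (tl p.2.length y)) := by
    filter_upwards [(isOpen_pre p.2).mem_nhds hpre] with y hy
    exact S.bwd_eq hp hy
  exact (((continuous_app p.1).comp (continuous_tl p.2.length)).continuousAt).congr hev.symm

/-- The homeomorphism of Cantor space defined by a prefix-replacement system. -/
noncomputable def homeo : (ℕ → Bool) ≃ₜ (ℕ → Bool) where
  toFun := S.fwd
  invFun := S.bwd
  left_inv := S.bwd_fwd
  right_inv := S.fwd_bwd
  continuous_toFun := S.continuous_fwd
  continuous_invFun := S.continuous_bwd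

lemma homeo_spec {x : ℕ → Bool} {p : List Bool × List Bool} (hp : p ∈ S.P)
    (hpre : Pre p.1 x) : Pre p.2 (S.homeo x) := by
  have : S.homeo x = app p.2 (tl p.1.length x) := S.fwd_eq hp hpre
  rw [this]
  exact pre_app _ _

end PSys

/-! ### Words and padding -/

/-- Incomparability of words. -/
def Incomp (s t : List Bool) : Prop := ¬ s <+: t ∧ ¬ t <+: s

lemma Incomp.symm {s t : List Bool} (h : Incomp s t) : Incomp t s := ⟨h.2, h.1⟩

lemma incomp_of_ne_of_length {s t : List Bool} (hl : s.length = t.length) (h : s ≠ t) :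
    Incomp s t := by
  constructor
  · intro hpre; exact h (hpre.eq_of_length hl)
  · intro hpre; exact h (hpre.eq_of_length hl.symm).symm

lemma Incomp.ne {s t : List Bool} (h : Incomp s t) : s ≠ t := by
  rintro rfl; exact h.1 (List.prefix_refl s)

lemma incomp_append {w u : List Bool} (b : Bool) (h : Incomp w u) : Incomp (w ++ [b]) u := by
  constructor
  · intro hpre
    exact h.1 (((w.prefix_append [b])).trans hpre)
  · intro hpre
    rcases le_or_gt u.length w.length with hle | hlt
    · refine h.2 ?_
      have := List.prefix_iff_eq_take.mp hpre
      rw [List.take_append_of_le_length hle] at this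
      exact this ▸ List.take_prefix _ _
    · have hlen : u.length = (w ++ [b]).length := by
        have := hpre.length_le
        simp only [List.length_append, List.length_singleton] at this ⊢
        omega
      have heq : u = w ++ [b] := hpre.eq_of_length hlen
      exact h.1 (heq ▸ (w.prefix_append [b] : w <+: w ++ [b]))

/-- The list of all words of length `N`. -/
noncomputable def allW (N : ℕ) : List (List Bool) :=
  (Finset.univ : Finset (Fin N → Bool)).toList.map (fun v => List.ofFn v)

lemma length_of_mem_allW {N : ℕ} {w : List Bool} (h : w ∈ allW N) : w.length = N := by
  obtain ⟨v, _, rfl⟩ := List.mem_map.mp h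
  exact List.length_ofFn

lemma mem_allW {N : ℕ} (v : Fin N → Bool) : List.ofFn v ∈ allW N :=
  List.mem_map.mpr ⟨v, Finset.mem_toList.mpr (Finset.mem_univ v), rfl⟩

lemma nodup_allW (N : ℕ) : (allW N).Nodup :=
  (Finset.nodup_toList _).map List.ofFn_injective

lemma pairwise_incomp_allW (N : ℕ) : (allW N).Pairwise Incomp := by
  refine (nodup_allW N).imp_of_mem ?_
  intro a b ha hb hne
  exact incomp_of_ne_of_length ((length_of_mem_allW ha).trans (length_of_mem_allW hb).symm) hne

lemma pre_firstN (x : ℕ → Bool) (N : ℕ) : Pre (List.ofFn (fun j : Fin N => x j)) x := by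
  intro j hj
  simp only [List.length_ofFn] at hj
  simp [List.get_ofFn]

/-- the invariant: `L` is a list of pairwise incomparable words exactly covering `A`. -/
def Good (A : Set (ℕ → Bool)) (L : List (List Bool)) : Prop :=
  (∀ w ∈ L, ∀ x, Pre w x → x ∈ A) ∧ (∀ x ∈ A, ∃ w ∈ L, Pre w x) ∧ L.Pairwise Incomp

/-- split the first word of a list into its two one-letter extensions. -/
def padStep : List (List Bool) → List (List Bool)
  | [] => []
  | w :: rest => (w ++ [false]) :: (w ++ [true]) :: rest

lemma padStep_nil : padStep [] = [] := rfl

lemma length_padStep {L : List (List Bool)} (h : L ≠ []) :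
    (padStep L).length = L.length + 1 := by
  cases L with
  | nil => exact absurd rfl h
  | cons w rest => simp [padStep]

lemma pre_append_iff {w : List Bool} {b : Bool} {x : ℕ → Bool} :
    Pre (w ++ [b]) x ↔ Pre w x ∧ x w.length = b := by
  constructor
  · intro h
    refine ⟨pre_of_prefix (w.prefix_append [b]) h, ?_⟩
    have hlen : w.length < (w ++ [b]).length := by simp
    have := h w.length hlen
    simpa using this
  · rintro ⟨h1, h2⟩
    intro j hj
    simp only [List.length_append, List.length_singleton] at hj
    rcases Nat.lt_or_ge j w.length with hlt | hge
    · rw [h1 j hlt]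
      simp [List.getElem_append_left hlt]
    · have hj' : j = w.length := by omega
      subst hj'
      simpa using h2

lemma good_padStep {A : Set (ℕ → Bool)} {L : List (List Bool)} (h : Good A L) :
    Good A (padStep L) := by
  cases L with
  | nil => simpa [padStep] using h
  | cons w rest =>
    obtain ⟨hsound, hcomp, hpair⟩ := h
    have hwmem : w ∈ w :: rest := List.mem_cons_self
    refine ⟨?_, ?_, ?_⟩
    · intro w' hw' x hx
      simp only [padStep, List.mem_cons] at hw'
      rcases hw' with rfl | rfl | hw'
      · exact hsound w hwmem x (pre_of_prefix (w.prefix_append _) hx)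
      · exact hsound w hwmem x (pre_of_prefix (w.prefix_append _) hx)
      · exact hsound w' (List.mem_cons_of_mem _ hw') x hx
    · intro x hx
      obtain ⟨w', hw', hpre⟩ := hcomp x hx
      rcases List.mem_cons.mp hw' with rfl | hw'
      · cases hb : x w'.length with
        | false =>
          exact ⟨w' ++ [false], by simp [padStep], pre_append_iff.mpr ⟨hpre, hb⟩⟩
        | true =>
          exact ⟨w' ++ [true], by simp [padStep], pre_append_iff.mpr ⟨hpre, hb⟩⟩
      · exact ⟨w', by simp [padStep, hw'], hpre⟩
    · rw [List.pairwise_cons] at hpair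
      obtain ⟨hw, hrest⟩ := hpair
      simp only [padStep]
      rw [List.pairwise_cons, List.pairwise_cons]
      refine ⟨?_, ?_, hrest⟩
      · intro u hu
        rcases List.mem_cons.mp hu with rfl | hu
        · refine incomp_of_ne_of_length (by simp) ?_
          simp
        · exact incomp_append false (hw u hu)
      · intro u hu
        exact incomp_append true (hw u hu)

/-- iterate `padStep`. -/
def pad (L : List (List Bool)) (k : ℕ) : List (List Bool) := padStep^[k] L

lemma pad_nil (k : ℕ) : pad [] k = [] := by
  induction k with
  | zero => rfl
  | succ k ih => rw [pad, Function.iterate_succ_apply', ← pad, ih, padStep_nil]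

lemma good_pad {A : Set (ℕ → Bool)} {L : List (List Bool)} (h : Good A L) (k : ℕ) :
    Good A (pad L k) := by
  induction k with
  | zero => exact h
  | succ k ih => rw [pad, Function.iterate_succ_apply', ← pad]; exact good_padStep ih

lemma padStep_ne_nil {L : List (List Bool)} (h : L ≠ []) : padStep L ≠ [] := by
  cases L with
  | nil => exact absurd rfl h
  | cons w rest => simp [padStep]

lemma pad_ne_nil {L : List (List Bool)} (h : L ≠ []) (k : ℕ) : pad L k ≠ [] := by
  induction k with
  | zero => exact h
  | succ k ih => rw [pad, Function.iterate_succ_apply', ← pad]; exact padStep_ne_nil ih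

lemma length_pad {L : List (List Bool)} (h : L ≠ []) (k : ℕ) :
    (pad L k).length = L.length + k := by
  induction k with
  | zero => rfl
  | succ k ih =>
    rw [pad, Function.iterate_succ_apply', ← pad, length_padStep (pad_ne_nil h k), ih]
    omega

/-! ### zip helpers -/

lemma exists_zip_right {γ δ : Type*} :
    ∀ {l₁ : List γ} {l₂ : List δ}, l₁.length = l₂.length → ∀ w ∈ l₁, ∃ t, (w, t) ∈ l₁.zip l₂
  | [], _, _, w, hw => absurd hw List.not_mem_nil
  | _ :: _, [], h, _, _ => by simp at h
  | a :: l₁, b :: l₂, h, w, hw => by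
    rcases List.mem_cons.mp hw with rfl | hw
    · exact ⟨b, by simp [List.zip_cons_cons]⟩
    · obtain ⟨t, ht⟩ := exists_zip_right (by simpa using h) w hw
      exact ⟨t, by simp [List.zip_cons_cons, ht]⟩

lemma exists_zip_left {γ δ : Type*} :
    ∀ {l₁ : List γ} {l₂ : List δ}, l₁.length = l₂.length → ∀ t ∈ l₂, ∃ w, (w, t) ∈ l₁.zip l₂
  | [], l₂, h, t, ht => by
    have hl : l₂ = [] := List.length_eq_zero_iff.mp h.symm
    subst hl; simp at ht
  | _ :: _, [], h, t, ht => absurd ht List.not_mem_nil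
  | a :: l₁, b :: l₂, h, t, ht => by
    rcases List.mem_cons.mp ht with rfl | ht
    · exact ⟨a, by simp [List.zip_cons_cons]⟩
    · obtain ⟨w, hw⟩ := exists_zip_left (by simpa using h) t ht
      exact ⟨w, by simp [List.zip_cons_cons, hw]⟩

lemma zip_right_unique {γ δ : Type*} :
    ∀ {l₁ : List γ} {l₂ : List δ}, l₁.Nodup → ∀ {a : γ} {b b' : δ},
      (a, b) ∈ l₁.zip l₂ → (a, b') ∈ l₁.zip l₂ → b = b'
  | [], l₂, _, a, b, b', h, _ => by simp at h
  | _ :: _, [], _, a, b, b', h, _ => by simp at h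
  | c :: l₁, d :: l₂, hnd, a, b, b', h, h' => by
    rw [List.zip_cons_cons, List.mem_cons] at h h'
    rcases h with h | h <;> rcases h' with h' | h'
    · rw [Prod.mk.injEq] at h h'
      exact h.2.trans h'.2.symm
    · exfalso
      cases h
      exact (List.nodup_cons.mp hnd).1 (List.of_mem_zip h').1
    · exfalso
      cases h'
      exact (List.nodup_cons.mp hnd).1 (List.of_mem_zip h).1
    · exact zip_right_unique (List.nodup_cons.mp hnd).2 h h'

lemma zip_left_unique {γ δ : Type*} :
    ∀ {l₁ : List γ} {l₂ : List δ}, l₂.Nodup → ∀ {a a' : γ} {b : δ},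
      (a, b) ∈ l₁.zip l₂ → (a', b) ∈ l₁.zip l₂ → a = a'
  | [], l₂, _, a, a', b, h, _ => by simp at h
  | _ :: _, [], _, a, a', b, h, _ => by simp at h
  | c :: l₁, d :: l₂, hnd, a, a', b, h, h' => by
    rw [List.zip_cons_cons, List.mem_cons] at h h'
    rcases h with h | h <;> rcases h' with h' | h'
    · rw [Prod.mk.injEq] at h h'
      exact h.1.trans h'.1.symm
    · exfalso
      cases h
      exact (List.nodup_cons.mp hnd).1 (List.of_mem_zip h').2
    · exfalso
      cases h'
      exact (List.nodup_cons.mp hnd).1 (List.of_mem_zip h).2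
    · exact zip_left_unique (List.nodup_cons.mp hnd).2 h h'

/-! ### The matching homeomorphism -/

lemma word_unique {Lst : List (List Bool)} (hp : Lst.Pairwise Incomp) {w w' : List Bool}
    (hw : w ∈ Lst) (hw' : w' ∈ Lst) {x : ℕ → Bool} (h1 : Pre w x) (h2 : Pre w' x) : w = w' := by
  by_contra hne
  have hinc : Incomp w w' :=
    by haveI : Std.Symm Incomp := ⟨fun a b hab => hab.symm⟩; exact hp.forall hw hw' hne
  rcases prefix_or_prefix h1 h2 with h | h
  · exact hinc.1 h
  · exact hinc.2 h

/-- A map into a finite type with clopen fibers is determined by a finite level. -/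
lemma exists_determined {L : Type*} [Fintype L] (α : (ℕ → Bool) → L)
    (hα : ∀ q, IsClopen (α ⁻¹' {q})) :
    ∃ N : ℕ, ∀ x y : ℕ → Bool, (∀ j < N, y j = x j) → α x = α y := by
  have h : ∀ q : L, ∃ n, ∀ x ∈ α ⁻¹' {q}, ∀ y : ℕ → Bool, (∀ j < n, y j = x j) →
      y ∈ α ⁻¹' {q} := fun q =>
    level_lemma ((hα q).isClosed.isCompact) (hα q).isOpen (subset_refl _)
  choose nq hnq using h
  refine ⟨Finset.univ.sup nq, fun x y hxy => ?_⟩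
  have hx : x ∈ α ⁻¹' {α x} := rfl
  have := hnq (α x) x hx y (fun j hj =>
    hxy j (lt_of_lt_of_le hj (Finset.le_sup (Finset.mem_univ (α x)))))
  exact this.symm

theorem exists_matching_homeo {L : Type*} [Fintype L] (α β : (ℕ → Bool) → L)
    (hα : ∀ q, IsClopen (α ⁻¹' {q})) (hβ : ∀ q, IsClopen (β ⁻¹' {q}))
    (hr : Set.range α = Set.range β) :
    ∃ g : (ℕ → Bool) ≃ₜ (ℕ → Bool), ∀ x, β (g x) = α x := by
  classical
  obtain ⟨N, hN⟩ := exists_determined α hα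
  obtain ⟨M, hM⟩ := exists_determined β hβ
  set z0 : ℕ → Bool := fun _ => false with hz0
  -- base word lists
  set Wd : L → List (List Bool) := fun q =>
    (allW N).filter (fun w => decide (α (app w z0) = q)) with hWd
  set Wc : L → List (List Bool) := fun q =>
    (allW M).filter (fun w => decide (β (app w z0) = q)) with hWc
  have hWdGood : ∀ q, Good (α ⁻¹' {q}) (Wd q) := by
    intro q
    refine ⟨?_, ?_, ?_⟩
    · intro w hw x hx
      rw [hWd, List.mem_filter] at hw
      have hq : α (app w z0) = q := of_decide_eq_true hw.2
      have hlen : w.length = N := length_of_mem_allW hw.1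
      have : α x = α (app w z0) := by
        refine hN x (app w z0) ?_
        intro j hj
        have hj' : j < w.length := hlen ▸ hj
        rw [pre_app w z0 j hj', hx j hj']
      simp only [Set.mem_preimage, Set.mem_singleton_iff]
      rw [this, hq]
    · intro x hx
      simp only [Set.mem_preimage, Set.mem_singleton_iff] at hx
      set w : List Bool := List.ofFn (fun j : Fin N => x j) with hw
      refine ⟨w, ?_, pre_firstN x N⟩
      rw [hWd, List.mem_filter]
      refine ⟨mem_allW _, decide_eq_true ?_⟩
      have : α (app w z0) = α x := by
        refine hN (app w z0) x ?_
        intro j hj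
        have hj' : j < w.length := by simp [hw, hj]
        rw [(pre_firstN x N) j (by simp [hj]), ← pre_app w z0 j hj']
      rw [this, hx]
    · exact (pairwise_incomp_allW N).sublist List.filter_sublist |>.imp id
  have hWcGood : ∀ q, Good (β ⁻¹' {q}) (Wc q) := by
    intro q
    refine ⟨?_, ?_, ?_⟩
    · intro w hw x hx
      rw [hWc, List.mem_filter] at hw
      have hq : β (app w z0) = q := of_decide_eq_true hw.2
      have hlen : w.length = M := length_of_mem_allW hw.1
      have : β x = β (app w z0) := by
        refine hM x (app w z0) ?_
        intro j hj
        have hj' : j < w.length := hlen ▸ hj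
        rw [pre_app w z0 j hj', hx j hj']
      simp only [Set.mem_preimage, Set.mem_singleton_iff]
      rw [this, hq]
    · intro x hx
      simp only [Set.mem_preimage, Set.mem_singleton_iff] at hx
      set w : List Bool := List.ofFn (fun j : Fin M => x j) with hw
      refine ⟨w, ?_, pre_firstN x M⟩
      rw [hWc, List.mem_filter]
      refine ⟨mem_allW _, decide_eq_true ?_⟩
      have : β (app w z0) = β x := by
        refine hM (app w z0) x ?_
        intro j hj
        have hj' : j < w.length := by simp [hw, hj]
        rw [(pre_firstN x M) j (by simp [hj]), ← pre_app w z0 j hj']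
      rw [this, hx]
    · exact (pairwise_incomp_allW M).sublist List.filter_sublist |>.imp id
  -- nonemptiness / emptiness of base lists
  have hWdne : ∀ q : L, q ∈ Set.range α → Wd q ≠ [] := by
    rintro q ⟨x, hx⟩
    obtain ⟨w, hw, -⟩ := (hWdGood q).2.1 x (by simp [hx])
    exact List.ne_nil_of_mem hw
  have hWcne : ∀ q : L, q ∈ Set.range α → Wc q ≠ [] := by
    intro q hq
    rw [hr] at hq
    obtain ⟨x, hx⟩ := hq
    obtain ⟨w, hw, -⟩ := (hWcGood q).2.1 x (by simp [hx])
    exact List.ne_nil_of_mem hw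
  have hWdnil : ∀ q : L, q ∉ Set.range α → Wd q = [] := by
    intro q hq
    rw [List.eq_nil_iff_forall_not_mem]
    intro w hw
    exact hq ⟨app w z0, (hWdGood q).1 w hw _ (pre_app w z0)⟩
  have hWcnil : ∀ q : L, q ∉ Set.range α → Wc q = [] := by
    intro q hq
    rw [List.eq_nil_iff_forall_not_mem]
    intro w hw
    refine hq ?_
    rw [hr]
    exact ⟨app w z0, (hWcGood q).1 w hw _ (pre_app w z0)⟩
  set cnt : L → ℕ := fun q => max (Wd q).length (Wc q).length with hcnt
  set Ld : L → List (List Bool) := fun q => pad (Wd q) (cnt q - (Wd q).length) with hLd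
  set Mc : L → List (List Bool) := fun q => pad (Wc q) (cnt q - (Wc q).length) with hMc
  have hLdGood : ∀ q, Good (α ⁻¹' {q}) (Ld q) := fun q => good_pad (hWdGood q) _
  have hMcGood : ∀ q, Good (β ⁻¹' {q}) (Mc q) := fun q => good_pad (hWcGood q) _
  have hlen : ∀ q, (Ld q).length = (Mc q).length := by
    intro q
    by_cases hq : q ∈ Set.range α
    · rw [hLd, hMc]
      simp only
      rw [length_pad (hWdne q hq), length_pad (hWcne q hq)]
      have h1 : (Wd q).length ≤ cnt q := le_max_left _ _
      have h2 : (Wc q).length ≤ cnt q := le_max_right _ _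
      omega
    · rw [hLd, hMc]
      simp only
      rw [hWdnil q hq, hWcnil q hq, pad_nil]
  set PL : List (List Bool × List Bool) :=
    (Finset.univ : Finset L).toList.flatMap (fun q => (Ld q).zip (Mc q)) with hPL
  have hmemPL : ∀ p : List Bool × List Bool, p ∈ PL ↔ ∃ q, p ∈ (Ld q).zip (Mc q) := by
    intro p
    rw [hPL, List.mem_flatMap]
    simp [Finset.mem_toList]
  have hnodupLd : ∀ q, (Ld q).Nodup := fun q => (hLdGood q).2.2.imp Incomp.ne
  have hnodupMc : ∀ q, (Mc q).Nodup := fun q => (hMcGood q).2.2.imp Incomp.ne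
  -- the canonical pair for the domain side
  have hdomex : ∀ x : ℕ → Bool, ∃ p : List Bool × List Bool,
      p ∈ (Ld (α x)).zip (Mc (α x)) ∧ Pre p.1 x := by
    intro x
    obtain ⟨w, hw, hpre⟩ := (hLdGood (α x)).2.1 x rfl
    obtain ⟨t, ht⟩ := exists_zip_right (hlen (α x)) w hw
    exact ⟨(w, t), ht, hpre⟩
  have hcodex : ∀ x : ℕ → Bool, ∃ p : List Bool × List Bool,
      p ∈ (Ld (β x)).zip (Mc (β x)) ∧ Pre p.2 x := by
    intro x
    obtain ⟨t, ht, hpre⟩ := (hMcGood (β x)).2.1 x rfl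
    obtain ⟨w, hw⟩ := exists_zip_left (hlen (β x)) t ht
    exact ⟨(w, t), hw, hpre⟩
  have hdom : ∀ x : ℕ → Bool, ∃! p, p ∈ PL ∧ Pre p.1 x := by
    intro x
    obtain ⟨p, hp, hpre⟩ := hdomex x
    refine ⟨p, ⟨(hmemPL p).mpr ⟨α x, hp⟩, hpre⟩, ?_⟩
    rintro ⟨a', b'⟩ ⟨hp', hpre'⟩
    obtain ⟨q', hq'⟩ := (hmemPL (a', b')).mp hp'
    have h1' : a' ∈ Ld q' := (List.of_mem_zip hq').1
    have hx' : x ∈ α ⁻¹' {q'} := (hLdGood q').1 a' h1' x hpre'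
    obtain rfl : α x = q' := by simpa using hx'
    have h1 : p.1 ∈ Ld (α x) := (List.of_mem_zip hp).1
    have heq1 : a' = p.1 := word_unique (hLdGood (α x)).2.2 h1' h1 hpre' hpre
    subst heq1
    have heq2 : b' = p.2 := zip_right_unique (hnodupLd (α x)) hq' hp
    subst heq2
    rfl
  have hcod : ∀ x : ℕ → Bool, ∃! p, p ∈ PL ∧ Pre p.2 x := by
    intro x
    obtain ⟨p, hp, hpre⟩ := hcodex x
    refine ⟨p, ⟨(hmemPL p).mpr ⟨β x, hp⟩, hpre⟩, ?_⟩
    rintro ⟨a', b'⟩ ⟨hp', hpre'⟩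
    obtain ⟨q', hq'⟩ := (hmemPL (a', b')).mp hp'
    have h2' : b' ∈ Mc q' := (List.of_mem_zip hq').2
    have hx' : x ∈ β ⁻¹' {q'} := (hMcGood q').1 b' h2' x hpre'
    obtain rfl : β x = q' := by simpa using hx'
    have h2 : p.2 ∈ Mc (β x) := (List.of_mem_zip hp).2
    have heq2 : b' = p.2 := word_unique (hMcGood (β x)).2.2 h2' h2 hpre' hpre
    subst heq2
    have heq1 : a' = p.1 := zip_left_unique (hnodupMc (β x)) hq' hp
    subst heq1
    rfl
  set S : PSys := ⟨PL, hdom, hcod⟩ with hS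
  refine ⟨S.homeo, ?_⟩
  intro x
  obtain ⟨p, hp, hpre⟩ := hdomex x
  have hmem : p ∈ PL := (hmemPL p).mpr ⟨α x, hp⟩
  have hpre2 : Pre p.2 (S.homeo x) := S.homeo_spec hmem hpre
  have h2 : p.2 ∈ Mc (α x) := (List.of_mem_zip hp).2
  have : S.homeo x ∈ β ⁻¹' {α x} := (hMcGood (α x)).1 p.2 h2 _ hpre2
  simpa using this


/-! ### The universal tuple -/

/-- The pairing homeomorphism between Cantor space and a countable power of itself. -/
noncomputable def Epair : (ℕ → Bool) ≃ₜ (ℕ → (ℕ → Bool)) where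
  toFun x := fun k r => x (Nat.pair k r)
  invFun y := fun j => y j.unpair.1 j.unpair.2
  left_inv x := by funext j; simp
  right_inv y := by funext k r; simp
  continuous_toFun := continuous_pi fun k => continuous_pi fun r => continuous_apply _
  continuous_invFun := continuous_pi fun j =>
    (continuous_apply j.unpair.2).comp (continuous_apply j.unpair.1)

variable (m : ℕ)

/-- the level-`n` label of a point relative to a tuple of homeomorphisms. -/
def label (u : Fin m → ((ℕ → Bool) ≃ₜ (ℕ → Bool))) (n : ℕ) (z : ℕ → Bool) :
    (Fin n → Bool) × (Fin m → Fin n → Bool) :=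
  (fun j => z j, fun i j => u i z j)

/-- the level-`n` pattern of a tuple. -/
def patt (u : Fin m → ((ℕ → Bool) ≃ₜ (ℕ → Bool))) (n : ℕ) :
    Set ((Fin n → Bool) × (Fin m → Fin n → Bool)) :=
  Set.range (label m u n)

open Classical in
/-- a witness tuple for a pattern, if one exists. -/
noncomputable def wit (n : ℕ) (S : Set ((Fin n → Bool) × (Fin m → Fin n → Bool))) :
    Fin m → ((ℕ → Bool) ≃ₜ (ℕ → Bool)) :=
  if h : ∃ u : Fin m → ((ℕ → Bool) ≃ₜ (ℕ → Bool)), patt m u n = S then h.choose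
  else fun _ => Homeomorph.refl _

lemma wit_spec {n : ℕ} {S : Set ((Fin n → Bool) × (Fin m → Fin n → Bool))}
    (h : ∃ u : Fin m → ((ℕ → Bool) ≃ₜ (ℕ → Bool)), patt m u n = S) :
    patt m (wit m n S) n = S := by
  rw [wit, dif_pos h]
  exact h.choose_spec

lemma label_fiber_clopen (u : Fin m → ((ℕ → Bool) ≃ₜ (ℕ → Bool))) (n : ℕ)
    (ρ : (ℕ → Bool) → (ℕ → Bool)) (hρ : Continuous ρ)
    (q : (Fin n → Bool) × (Fin m → Fin n → Bool)) :
    IsClopen ((fun y => label m u n (ρ y)) ⁻¹' {q}) := by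
  have hdecomp : (fun y => label m u n (ρ y)) ⁻¹' {q} =
      (⋂ j : Fin n, {y | ρ y (j : ℕ) = q.1 j}) ∩
        ⋂ p : Fin m × Fin n, {y | u p.1 (ρ y) (p.2 : ℕ) = q.2 p.1 p.2} := by
    ext y
    constructor
    · intro h
      have h' : label m u n (ρ y) = q := h
      subst h'
      exact ⟨Set.mem_iInter.mpr fun j => rfl, Set.mem_iInter.mpr fun p => rfl⟩
    · intro h
      simp only [Set.mem_inter_iff, Set.mem_iInter, Set.mem_setOf_eq] at h
      show label m u n (ρ y) = q
      have hq : q = (q.1, q.2) := rfl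
      rw [hq, label, Prod.mk.injEq]
      exact ⟨funext fun j => h.1 j, funext fun i => funext fun j => h.2 (i, j)⟩
  rw [hdecomp]
  have hpiece1 : ∀ j : Fin n, IsClopen {y : ℕ → Bool | ρ y (j : ℕ) = q.1 j} := by
    intro j
    have : {y : ℕ → Bool | ρ y (j : ℕ) = q.1 j} =
        (fun y : ℕ → Bool => ρ y (j : ℕ)) ⁻¹' {q.1 j} := rfl
    rw [this]
    exact (isClopen_discrete _).preimage ((continuous_apply (j : ℕ)).comp hρ)
  have hpiece2 : ∀ p : Fin m × Fin n,
      IsClopen {y : ℕ → Bool | u p.1 (ρ y) (p.2 : ℕ) = q.2 p.1 p.2} := by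
    intro p
    have : {y : ℕ → Bool | u p.1 (ρ y) (p.2 : ℕ) = q.2 p.1 p.2} =
        (fun y : ℕ → Bool => u p.1 (ρ y) (p.2 : ℕ)) ⁻¹' {q.2 p.1 p.2} := rfl
    rw [this]
    exact (isClopen_discrete _).preimage
      ((continuous_apply ((p.2 : ℕ))).comp ((u p.1).continuous.comp hρ))
  refine IsClopen.inter ⟨isClosed_iInter fun j => (hpiece1 j).isClosed,
      isOpen_iInter_of_finite fun j => (hpiece1 j).isOpen⟩
    ⟨isClosed_iInter fun p => (hpiece2 p).isClosed,
      isOpen_iInter_of_finite fun p => (hpiece2 p).isOpen⟩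

/-- The key approximation property of the universal tuple. -/
lemma key : ∃ f : Fin m → ((ℕ → Bool) ≃ₜ (ℕ → Bool)),
    ∀ (u : Fin m → ((ℕ → Bool) ≃ₜ (ℕ → Bool))) (n : ℕ),
      ∃ g : (ℕ → Bool) ≃ₜ (ℕ → Bool),
        ∀ (i : Fin m) (z : ℕ → Bool), ∀ j < n, g ((f i) (g.symm z)) j = u i z j := by
  classical
  have hne : Nonempty (Σ n : ℕ, Set ((Fin n → Bool) × (Fin m → Fin n → Bool))) := ⟨⟨0, ∅⟩⟩
  obtain ⟨e, he⟩ := exists_surjective_nat (Σ n : ℕ, Set ((Fin n → Bool) × (Fin m → Fin n → Bool)))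
  set W : ℕ → Fin m → ((ℕ → Bool) ≃ₜ (ℕ → Bool)) := fun k => wit m (e k).1 (e k).2 with hW
  set f : Fin m → ((ℕ → Bool) ≃ₜ (ℕ → Bool)) := fun i =>
    Epair.trans ((Homeomorph.piCongrRight (Y₁ := fun _ : ℕ => (ℕ → Bool)) (Y₂ := fun _ : ℕ => (ℕ → Bool)) (fun k => W k i)).trans Epair.symm) with hf
  refine ⟨f, ?_⟩
  intro u n
  obtain ⟨k, hk⟩ := he ⟨n, patt m u n⟩
  set v : Fin m → ((ℕ → Bool) ≃ₜ (ℕ → Bool)) := W k with hv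
  have hvpatt : patt m v n = patt m u n := by
    have h1 : v = wit m (e k).1 (e k).2 := rfl
    rw [h1, hk]
    exact wit_spec m ⟨u, rfl⟩
  set ρ : (ℕ → Bool) → (ℕ → Bool) := fun y => Epair y k with hρ
  have hρcont : Continuous ρ := by
    refine continuous_pi fun r => ?_
    exact continuous_apply (Nat.pair k r)
  have hρsurj : Function.Surjective ρ := by
    intro z
    refine ⟨Epair.symm (fun _ => z), ?_⟩
    have : Epair (Epair.symm (fun _ => z)) = fun _ => z := Epair.apply_symm_apply _
    rw [hρ]
    simp only [this]
  set α : (ℕ → Bool) → ((Fin n → Bool) × (Fin m → Fin n → Bool)) :=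
    fun y => label m v n (ρ y) with hα
  set β : (ℕ → Bool) → ((Fin n → Bool) × (Fin m → Fin n → Bool)) :=
    fun y => label m u n y with hβ
  have hαclopen : ∀ q, IsClopen (α ⁻¹' {q}) := label_fiber_clopen m v n ρ hρcont
  have hβclopen : ∀ q, IsClopen (β ⁻¹' {q}) := label_fiber_clopen m u n id continuous_id
  have hrange : Set.range α = Set.range β := by
    have h1 : Set.range α = patt m v n := by
      rw [hα]
      have : (fun y => label m v n (ρ y)) = (label m v n) ∘ ρ := rfl
      rw [this, Set.range_comp, hρsurj.range_eq, Set.image_univ]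
      rfl
    have h2 : Set.range β = patt m u n := rfl
    rw [h1, h2, hvpatt]
  obtain ⟨g, hg⟩ := exists_matching_homeo α β hαclopen hβclopen hrange
  refine ⟨g, ?_⟩
  intro i z j hj
  set y : ℕ → Bool := g.symm z with hy
  have hgy : g y = z := g.apply_symm_apply z
  have h1 : label m u n (g y) = label m v n (ρ y) := hg y
  have h2 : label m u n (g (f i y)) = label m v n (ρ (f i y)) := hg (f i y)
  have hρf : ρ (f i y) = v i (ρ y) := by
    have hEf : Epair (f i y) = (Homeomorph.piCongrRight (Y₁ := fun _ : ℕ => (ℕ → Bool)) (Y₂ := fun _ : ℕ => (ℕ → Bool)) (fun k' => W k' i)) (Epair y) := by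
      rw [hf]
      simp only [Homeomorph.trans_apply]
      exact Epair.apply_symm_apply _
    rw [hρ]
    simp only [hEf]
    rfl
  -- extract coordinates
  have hcoord1 : ∀ jf : Fin n, u i z jf = (label m v n (ρ y)).2 i jf := by
    intro jf
    have := congrArg (fun p => p.2 i jf) h1
    simpa [label, hgy] using this
  have hcoord2 : ∀ jf : Fin n, g (f i y) (jf : ℕ) = (label m v n (ρ (f i y))).1 jf := by
    intro jf
    have := congrArg (fun p => p.1 jf) h2
    simpa [label] using this
  have hcoord3 : ∀ jf : Fin n, (label m v n (ρ (f i y))).1 jf = (label m v n (ρ y)).2 i jf := by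
    intro jf
    rw [hρf]
    simp [label]
  have : g (f i y) j = u i z j := by
    have h4 := hcoord2 ⟨j, hj⟩
    have h5 := hcoord3 ⟨j, hj⟩
    have h6 := hcoord1 ⟨j, hj⟩
    simp only [h4, h5, ← h6]
  exact this

lemma gen_level {V : Set C(ℕ → Bool, ℕ → Bool)}
    (hV : TopologicalSpace.GenerateOpen
      (Set.image2 (fun K U => {f : C(ℕ → Bool, ℕ → Bool) | Set.MapsTo f K U})
        {K | IsCompact K} {U | IsOpen U}) V) :
    ∀ fc ∈ V, ∃ n : ℕ, ∀ f' : C(ℕ → Bool, ℕ → Bool),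
      (∀ (z : ℕ → Bool) (j : ℕ), j < n → f' z j = fc z j) → f' ∈ V := by
  induction hV with
  | basic s hs =>
    obtain ⟨K, hK, U, hU, rfl⟩ := hs
    intro fc hfc
    have himg : IsCompact (fc '' K) := hK.image fc.continuous
    have hsub : fc '' K ⊆ U := Set.image_subset_iff.mpr hfc
    obtain ⟨n, hn⟩ := level_lemma himg hU hsub
    refine ⟨n, fun f' hagree => fun z hz => ?_⟩
    exact hn (fc z) ⟨z, hz, rfl⟩ (f' z) (fun j hj => hagree z j hj)
  | univ => exact fun fc _ => ⟨0, fun _ _ => trivial⟩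
  | inter s t _ _ ihs iht =>
    intro fc hfc
    obtain ⟨n1, h1⟩ := ihs fc hfc.1
    obtain ⟨n2, h2⟩ := iht fc hfc.2
    refine ⟨max n1 n2, fun f' hagree => ⟨?_, ?_⟩⟩
    · exact h1 f' (fun z j hj => hagree z j (lt_of_lt_of_le hj (le_max_left _ _)))
    · exact h2 f' (fun z j hj => hagree z j (lt_of_lt_of_le hj (le_max_right _ _)))
  | sUnion S _ ih =>
    intro fc hfc
    obtain ⟨s, hs, hfcs⟩ := hfc
    obtain ⟨n, hn⟩ := ih s hs fc hfcs
    exact ⟨n, fun f' hagree => ⟨s, hs, hn f' hagree⟩⟩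

end DOrbit

/-- For every `m ≥ 1` there is a tuple in `H(2^ℕ)^m` whose diagonal conjugacy
orbit is dense in `H(2^ℕ)^m`. -/
theorem dense_diagonal_conjugacy_orbit (m : ℕ) (hm : 0 < m) :
    ∃ f : Fin m → H,
      Dense {x : Fin m → H | ∃ g : H, ∀ i, x i = g * f i * g⁻¹} := by
  obtain ⟨f, hf⟩ := DOrbit.key m
  refine ⟨f, ?_⟩
  rw [dense_iff_inter_open]
  rintro o ho ⟨u, huo⟩
  obtain ⟨I, U, hIU, hsub⟩ := isOpen_pi_iff.mp ho u huo
  have hnb : ∀ i : Fin m, ∃ n : ℕ, i ∈ I →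
      ∀ h' : H, (∀ (z : Cantor) (jj : ℕ), jj < n → h' z jj = u i z jj) → h' ∈ U i := by
    intro i
    by_cases hi : i ∈ I
    · obtain ⟨Vi, hVi, hUi⟩ := isOpen_induced_iff.mp (hIU i hi).1
      have hmem : ((u i : C(Cantor, Cantor))) ∈ Vi := by
        have h2 := (hIU i hi).2
        rw [← hUi] at h2
        exact h2
      obtain ⟨n, hn⟩ := DOrbit.gen_level hVi (u i) hmem
      refine ⟨n, fun _ h' hagree => ?_⟩
      rw [← hUi]
      exact hn (h' : C(Cantor, Cantor)) (fun z j hj => hagree z j hj)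
    · exact ⟨0, fun hi' => absurd hi' hi⟩
  choose nn hnn using hnb
  set N := Finset.univ.sup nn with hN
  obtain ⟨g, hg⟩ := hf u N
  refine ⟨fun i => g * f i * g⁻¹, hsub ?_, g, fun i => rfl⟩
  intro i hi
  refine hnn i hi _ ?_
  intro z jj hjj
  have h := hg i z jj (lt_of_lt_of_le hjj (Finset.le_sup (Finset.mem_univ i)))
  exact h
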